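/- Fix c > 0 and let B_c(x) = Γ(x)Γ(c-x)/Γ(c) and R_c(x) = -ψ(x) - ψ(c-x) - 2γ for x ∈ (0,c). Then the function q_c(x) = R_c(x)/B_c(x) is strictly decreasing on (0, c/2], and lim_{x→0⁺} q_c(x) = 1. -/

import Mathlib

open Filter Topology Set

local notation "γ" => Real.eulerMascheroniConstant

namespace StmtAux

noncomputable def Af (x : ℝ) : ℝ := ∑' k : ℕ, (1/((k:ℝ)+1) - 1/(x+k))
noncomputable def Tf (x : ℝ) : ℝ := ∑' k : ℕ, 1/(x+(k:ℝ))^2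
noncomputable def Vf (x : ℝ) : ℝ := ∑' k : ℕ, 1/(x+(k:ℝ))^3
noncomputable def psi (x : ℝ) : ℝ := -γ + Af x

lemma xk_pos {x : ℝ} (hx : 0 < x) (k : ℕ) : 0 < x + (k:ℝ) := by positivity

lemma summable_base {p : ℕ} (hp : 1 < p) : Summable (fun k : ℕ => 1/((k:ℝ)+1)^p) := by
  have h := (summable_nat_add_iff 1).mpr (Real.summable_one_div_nat_pow.mpr hp)
  refine h.congr fun k => ?_
  push_cast
  ring

lemma min_mul_le {ε x : ℝ} (hε : 0 < ε) (hεx : ε ≤ x) (k : ℕ) :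
    min ε 1 * ((k:ℝ)+1) ≤ x + k := by
  have h1 : min ε 1 ≤ x := (min_le_left _ _).trans hεx
  have h2 : min ε 1 ≤ 1 := min_le_right _ _
  have h3 : (0:ℝ) ≤ k := Nat.cast_nonneg k
  nlinarith

lemma one_div_pow_bound {ε x : ℝ} (hε : 0 < ε) (hεx : ε ≤ x) (k p : ℕ) :
    1/(x+(k:ℝ))^p ≤ (1/(min ε 1)^p) * (1/((k:ℝ)+1)^p) := by
  have hx : 0 < x := hε.trans_le hεx
  have hm : 0 < min ε 1 := lt_min hε one_pos
  have h2 : (min ε 1)^p * ((k:ℝ)+1)^p ≤ (x+(k:ℝ))^p := by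
    rw [← mul_pow]
    exact pow_le_pow_left₀ (by positivity) (min_mul_le hε hεx k) p
  calc 1/(x+(k:ℝ))^p ≤ 1/((min ε 1)^p * ((k:ℝ)+1)^p) :=
        one_div_le_one_div_of_le (by positivity) h2
    _ = (1/(min ε 1)^p) * (1/((k:ℝ)+1)^p) := by
        rw [one_div_mul_one_div]

lemma summableT {x : ℝ} (hx : 0 < x) : Summable (fun k : ℕ => 1/(x+(k:ℝ))^2) :=
  Summable.of_nonneg_of_le (fun k => by positivity)
    (fun k => one_div_pow_bound hx le_rfl k 2)
    ((summable_base one_lt_two).mul_left _)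

lemma summableV {x : ℝ} (hx : 0 < x) : Summable (fun k : ℕ => 1/(x+(k:ℝ))^3) :=
  Summable.of_nonneg_of_le (fun k => by positivity)
    (fun k => one_div_pow_bound hx le_rfl k 3)
    ((summable_base (by norm_num)).mul_left _)

lemma A_term_eq {x : ℝ} (hx : 0 < x) (k : ℕ) :
    1/((k:ℝ)+1) - 1/(x+k) = (x-1)/(((k:ℝ)+1)*(x+k)) := by
  have h1 : ((k:ℝ)+1) ≠ 0 := by positivity
  have h2 : (x+(k:ℝ)) ≠ 0 := (xk_pos hx k).ne'
  field_simp
  ring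

lemma A_term_bound {ε M x : ℝ} (hε : 0 < ε) (hεx : ε ≤ x) (hxM : x ≤ M) (k : ℕ) :
    |1/((k:ℝ)+1) - 1/(x+k)| ≤ ((M+1)/(min ε 1)) * (1/((k:ℝ)+1)^2) := by
  have hx : 0 < x := hε.trans_le hεx
  have hm : 0 < min ε 1 := lt_min hε one_pos
  have hk : (0:ℝ) < (k:ℝ)+1 := by positivity
  have hxk : 0 < x + (k:ℝ) := xk_pos hx k
  rw [A_term_eq hx, abs_div, abs_of_pos (by positivity : (0:ℝ) < ((k:ℝ)+1)*(x+k))]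
  have hnum : |x - 1| ≤ M + 1 := by
    rw [abs_le]; constructor <;> nlinarith
  have hden : min ε 1 * ((k:ℝ)+1)^2 ≤ ((k:ℝ)+1)*(x+(k:ℝ)) := by
    have := min_mul_le hε hεx k
    nlinarith
  calc |x-1| / (((k:ℝ)+1)*(x+k)) ≤ (M+1) / (min ε 1 * ((k:ℝ)+1)^2) := by
        apply div_le_div₀ (by nlinarith) hnum (by positivity) hden
    _ = ((M+1)/(min ε 1)) * (1/((k:ℝ)+1)^2) := by
        field_simp
  
lemma summableA {x : ℝ} (hx : 0 < x) : Summable (fun k : ℕ => 1/((k:ℝ)+1) - 1/(x+k)) := by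
  apply Summable.of_abs
  exact Summable.of_nonneg_of_le (fun k => abs_nonneg _)
    (fun k => A_term_bound hx le_rfl le_rfl k)
    ((summable_base one_lt_two).mul_left _)








lemma tlu_shift {F : ℕ → ℝ → ℝ} {f : ℝ → ℝ} {s : Set ℝ}
    (h : TendstoLocallyUniformlyOn F f atTop s) :
    TendstoLocallyUniformlyOn (fun n => F (n+1)) f atTop s := by
  intro u hu x hxs
  obtain ⟨t, ht, hn⟩ := h u hu x hxs
  exact ⟨t, ht, (tendsto_add_atTop_nat 1).eventually hn⟩

lemma tuo_shift {F : ℕ → ℝ → ℝ} {f : ℝ → ℝ} {s : Set ℝ}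
    (h : TendstoUniformlyOn F f atTop s) :
    TendstoUniformlyOn (fun n => F (n+1)) f atTop s := by
  intro u hu
  exact (tendsto_add_atTop_nat 1).eventually (h u hu)

lemma tlu_partial_sums (f : ℕ → ℝ → ℝ)
    (hb : ∀ ε M : ℝ, 0 < ε → ∃ u : ℕ → ℝ, Summable u ∧
      ∀ n, ∀ x ∈ Icc ε M, ‖f n x‖ ≤ u n) :
    TendstoLocallyUniformlyOn (fun n x => ∑ j ∈ Finset.range n, f j x)
      (fun x => ∑' j, f j x) atTop (Ioi (0:ℝ)) := by
  rw [tendstoLocallyUniformlyOn_iff_forall_isCompact isOpen_Ioi]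
  intro K hK hKc
  rcases K.eq_empty_or_nonempty with rfl | hne
  · exact tendstoUniformlyOn_empty
  · obtain ⟨ε, hεK, hεmin⟩ := hKc.exists_isMinOn hne continuousOn_id
    obtain ⟨M, hMK, hMmax⟩ := hKc.exists_isMaxOn hne continuousOn_id
    have hε : 0 < ε := hK hεK
    obtain ⟨u, hu, hfu⟩ := hb ε M hε
    exact tendstoUniformlyOn_tsum_nat hu fun n x hx => hfu n x ⟨hεmin hx, hMmax hx⟩



lemma harm_cast (m : ℕ) : ((harmonic m : ℚ) : ℝ) = ∑ j ∈ Finset.range m, (1/((j:ℝ)+1)) := by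
  rw [harmonic]
  push_cast
  simp [one_div]

lemma tendsto_const_part :
    Tendsto (fun n : ℕ => Real.log n - ∑ j ∈ Finset.range (n+1), (1/((j:ℝ)+1)))
      atTop (𝓝 (-γ)) := by
  have t1 : Tendsto (fun n : ℕ => ((harmonic (n+1) : ℚ) : ℝ) - Real.log (n+1)) atTop (𝓝 γ) := by
    have := Real.tendsto_harmonic_sub_log.comp (tendsto_add_atTop_nat 1)
    refine this.congr fun n => ?_
    simp [Function.comp]
  have t2 : Tendsto (fun n : ℕ => Real.log ((n:ℝ)+1) - Real.log n) atTop (𝓝 0) := by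
    have base : Tendsto (fun n : ℕ => 1 + 1/(n:ℝ)) atTop (𝓝 1) := by
      simpa using tendsto_const_nhds.add (tendsto_one_div_atTop_nhds_zero_nat : Tendsto (fun n : ℕ => 1/(n:ℝ)) atTop (𝓝 0))
    have hlog : Tendsto (fun n : ℕ => Real.log (1 + 1/(n:ℝ))) atTop (𝓝 0) := by
      have := (Real.continuousAt_log one_ne_zero).tendsto.comp base
      simpa [Function.comp_def] using this
    refine hlog.congr' ?_
    filter_upwards [eventually_ge_atTop 1] with n hn
    have hn0 : (0:ℝ) < n := by exact_mod_cast hn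
    rw [← Real.log_div (by positivity) hn0.ne']
    congr 1
    field_simp
  have := (t1.add t2).neg
  rw [add_zero] at this
  refine this.congr' ?_
  filter_upwards [eventually_ge_atTop 1] with n hn
  rw [harm_cast]
  push_cast
  ring

lemma hasDerivAt_log_Gamma {x : ℝ} (hx : 0 < x) :
    HasDerivAt (fun y : ℝ => Real.log (Real.Gamma y)) (psi x) x := by
  set F : ℕ → ℝ → ℝ := fun n y =>
    y * Real.log n + Real.log (Nat.factorial n) - ∑ j ∈ Finset.range (n+1), Real.log (y + j)
    with hFdef
  set F' : ℕ → ℝ → ℝ :=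
    ((fun n _ => Real.log n - ∑ j ∈ Finset.range (n+1), (1/((j:ℝ)+1))) : ℕ → ℝ → ℝ) +
    ((fun n y => ∑ j ∈ Finset.range (n+1), (1/((j:ℝ)+1) - 1/(y+j))) : ℕ → ℝ → ℝ) with hF'def
  have key : ∀ z ∈ Ioi (0:ℝ), HasDerivAt (fun y : ℝ => Real.log (Real.Gamma y)) (psi z) z := by
    intro z hz
    refine hasDerivAt_of_tendstoLocallyUniformlyOn (l := (atTop : Filter ℕ)) isOpen_Ioi (f := F) (f' := F') ?_ ?_ ?_ hz
    · -- uniform convergence of derivatives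
      rw [tendstoLocallyUniformlyOn_iff_forall_isCompact isOpen_Ioi]
      intro K hK hKc
      rcases K.eq_empty_or_nonempty with rfl | hne
      · exact tendstoUniformlyOn_empty
      obtain ⟨ε, hεK, hεmin⟩ := hKc.exists_isMinOn hne continuousOn_id
      obtain ⟨M, hMK, hMmax⟩ := hKc.exists_isMaxOn hne continuousOn_id
      have hε : 0 < ε := hK hεK
      have part1 : TendstoUniformlyOn
          (fun (n : ℕ) (_ : ℝ) => Real.log n - ∑ j ∈ Finset.range (n+1), (1/((j:ℝ)+1)))
          (fun _ => -γ) atTop K :=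
        tendsto_const_part.tendstoUniformlyOn_const K
      have part2 : TendstoUniformlyOn
          (fun n y => ∑ j ∈ Finset.range (n+1), (1/((j:ℝ)+1) - 1/(y+j)))
          Af atTop K := by
        refine tuo_shift (F := fun n y => ∑ j ∈ Finset.range n, (1/((j:ℝ)+1) - 1/(y+j))) ?_
        exact tendstoUniformlyOn_tsum_nat ((summable_base one_lt_two).mul_left ((M+1)/(min ε 1)))
          (fun n x hx' => A_term_bound hε (hεmin hx') (hMmax hx') n)
      exact part1.add part2
    · -- derivatives
      filter_upwards with n
      intro y hy
      have hy0 : 0 < y := hy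
      have h1 : HasDerivAt (fun y : ℝ => y * Real.log n + Real.log (Nat.factorial n))
          (Real.log n) y := by
        simpa using ((hasDerivAt_id y).mul_const (Real.log n)).add_const
          (Real.log (Nat.factorial n))
      have h2 : ∀ j ∈ Finset.range (n+1),
          HasDerivAt (fun y : ℝ => Real.log (y + j)) (1/(y+(j:ℝ))) y := by
        intro j _
        have hne : y + (j:ℝ) ≠ 0 := (xk_pos hy0 j).ne'
        simpa [one_div] using ((hasDerivAt_id y).add_const (j:ℝ)).log hne
      have h3 := HasDerivAt.fun_sum h2
      have h4 := h1.fun_sub h3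
      convert h4 using 1
      simp only [hF'def, Pi.add_apply]
      rw [Finset.sum_sub_distrib]
      ring
    · -- pointwise convergence
      intro y hy
      have hy0 : 0 < y := hy
      have h0 : Tendsto (fun n => Real.log (Real.GammaSeq y n)) atTop
          (𝓝 (Real.log (Real.Gamma y))) :=
        ((Real.continuousAt_log (Real.Gamma_pos_of_pos hy0).ne').tendsto).comp
          (Real.GammaSeq_tendsto_Gamma y)
      refine h0.congr' ?_
      filter_upwards [eventually_ge_atTop 1] with n hn
      have hn0 : (0:ℝ) < n := by exact_mod_cast hn
      have hprod : 0 < ∏ j ∈ Finset.range (n+1), (y + (j:ℝ)) :=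
        Finset.prod_pos fun j _ => xk_pos hy0 j
      have hfac : (0:ℝ) < (Nat.factorial n : ℝ) := by exact_mod_cast n.factorial_pos
      have hrpow : (0:ℝ) < (n:ℝ) ^ y := Real.rpow_pos_of_pos hn0 y
      rw [Real.GammaSeq, Real.log_div (by positivity) hprod.ne',
        Real.log_mul hrpow.ne' hfac.ne', Real.log_rpow hn0,
        Real.log_prod (fun j _ => (xk_pos hy0 j).ne')]
  exact key x hx

lemma hasDerivAt_Af {x : ℝ} (hx : 0 < x) : HasDerivAt Af (Tf x) x := by
  have key : ∀ z ∈ Ioi (0:ℝ), HasDerivAt Af (Tf z) z := by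
    intro z hz
    refine hasDerivAt_of_tendstoLocallyUniformlyOn (l := (atTop : Filter ℕ)) isOpen_Ioi
      (f := fun n y => ∑ j ∈ Finset.range n, (1/((j:ℝ)+1) - 1/(y+j)))
      (f' := fun n y => ∑ j ∈ Finset.range n, 1/(y+(j:ℝ))^2) ?_ ?_ ?_ hz
    · apply tlu_partial_sums
      intro ε M hε
      refine ⟨fun k => (1/(min ε 1)^2) * (1/((k:ℝ)+1)^2),
        (summable_base one_lt_two).mul_left _, fun n x hx' => ?_⟩
      rw [Real.norm_eq_abs, abs_of_nonneg (by positivity)]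
      exact one_div_pow_bound hε hx'.1 n 2
    · filter_upwards with n
      intro y hy
      have hy0 : 0 < y := hy
      apply HasDerivAt.fun_sum
      intro j _
      have hne : y + (j:ℝ) ≠ 0 := (xk_pos hy0 j).ne'
      have h := (((hasDerivAt_id y).add_const (j:ℝ)).inv hne).const_sub (1/((j:ℝ)+1))
      have hval : -(-1 / (id y + (j:ℝ)) ^ 2) = 1/(y+(j:ℝ))^2 := by
        simp only [id_eq]
        ring
      rw [hval] at h
      simpa [one_div] using h
    · intro y hy
      exact (summableA hy).hasSum.tendsto_sum_nat
  exact key x hx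

lemma hasDerivAt_psi {x : ℝ} (hx : 0 < x) : HasDerivAt psi (Tf x) x :=
  (hasDerivAt_Af hx).const_add (-γ)

lemma hasDerivAt_Tf {x : ℝ} (hx : 0 < x) : HasDerivAt Tf (-2 * Vf x) x := by
  have key : ∀ z ∈ Ioi (0:ℝ), HasDerivAt Tf ((fun y => ∑' k : ℕ, (-2) * (1/(y+(k:ℝ))^3)) z) z := by
    intro z hz
    refine hasDerivAt_of_tendstoLocallyUniformlyOn (l := (atTop : Filter ℕ)) isOpen_Ioi
      (f := fun n y => ∑ j ∈ Finset.range n, 1/(y+(j:ℝ))^2)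
      (f' := fun n y => ∑ j ∈ Finset.range n, (-2) * (1/(y+(j:ℝ))^3))
      (g' := fun y => ∑' k : ℕ, (-2) * (1/(y+(k:ℝ))^3)) ?_ ?_ ?_ hz
    · apply tlu_partial_sums
      intro ε M hε
      refine ⟨fun k => 2 * ((1/(min ε 1)^3) * (1/((k:ℝ)+1)^3)),
        ((summable_base (by norm_num)).mul_left _).mul_left 2, fun n x hx' => ?_⟩
      have hxp : (0:ℝ) < x := hε.trans_le hx'.1
      rw [Real.norm_eq_abs, abs_mul, abs_of_nonpos (by norm_num : (-2:ℝ) ≤ 0),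
        abs_of_nonneg (one_div_pos.mpr (pow_pos (xk_pos hxp n) 3)).le]
      have := one_div_pow_bound hε hx'.1 n 3
      nlinarith [this]
    · filter_upwards with n
      intro y hy
      have hy0 : 0 < y := hy
      apply HasDerivAt.fun_sum
      intro j _
      have hne : y + (j:ℝ) ≠ 0 := (xk_pos hy0 j).ne'
      have hpow : HasDerivAt (fun y : ℝ => (y+(j:ℝ))^2) (2*(y+(j:ℝ))) y := by
        simpa using ((hasDerivAt_id y).add_const (j:ℝ)).fun_pow 2
      have h := hpow.fun_inv (pow_ne_zero 2 hne)
      have he : -(2*(y+(j:ℝ))) / ((y+(j:ℝ))^2)^2 = (-2) * (1/(y+(j:ℝ))^3) := by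
        field_simp
      rw [he] at h
      have hf : (fun z : ℝ => ((z+(j:ℝ))^2)⁻¹) = fun z => 1/(z+(j:ℝ))^2 := by
        funext z
        rw [one_div]
      rw [hf] at h
      exact h
    · intro y hy
      exact (summableT hy).hasSum.tendsto_sum_nat
  have h : HasDerivAt Tf (∑' k : ℕ, (-2) * (1/(x+(k:ℝ))^3)) x := key x hx
  have he : ∑' k : ℕ, (-2) * (1/(x+(k:ℝ))^3) = -2 * Vf x := by
    rw [Vf, tsum_mul_left]
  rwa [he] at h

lemma Gamma_diff {x : ℝ} (hx : 0 < x) : DifferentiableAt ℝ Real.Gamma x :=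
  Real.differentiableAt_Gamma fun m =>
    (lt_of_le_of_lt (neg_nonpos.mpr m.cast_nonneg) hx).ne'

lemma psi_rec {x : ℝ} (hx : 0 < x) : psi (x+1) = psi x + 1/x := by
  set f : ℝ → ℝ := fun y => Real.log (Real.Gamma y) with hf
  have d1 : deriv f (x+1) = psi (x+1) := (hasDerivAt_log_Gamma (by linarith)).deriv
  have d0 : deriv f x = psi x := (hasDerivAt_log_Gamma hx).deriv
  have h_rec : ∀ y : ℝ, 0 < y → f (y + 1) = f y + Real.log y := by
    intro y hy
    simp only [hf, Real.Gamma_add_one hy.ne',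
      Real.log_mul hy.ne' (Real.Gamma_pos_of_pos hy).ne', add_comm]
  have key : deriv f (x+1) = deriv f x + 1/x := by
    rw [← deriv_comp_add_const, one_div, ← Real.deriv_log,
      ← deriv_add ((hasDerivAt_log_Gamma hx).differentiableAt)
        (Real.differentiableAt_log hx.ne')]
    apply Filter.EventuallyEq.deriv_eq
    filter_upwards [eventually_gt_nhds hx] using h_rec
  rw [d1, d0] at key
  exact key

lemma Af_rec {x : ℝ} (hx : 0 < x) : Af (x+1) = Af x + 1/x := by
  have := psi_rec hx
  simp only [psi] at this
  linarith

lemma Tf_rec {x : ℝ} (hx : 0 < x) : Tf x = 1/x^2 + Tf (x+1) := by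
  rw [Tf, Summable.tsum_eq_zero_add (summableT hx)]
  congr 1
  · norm_num
  · rw [Tf]
    apply tsum_congr
    intro k
    congr 2
    push_cast
    ring

lemma Vf_rec {x : ℝ} (hx : 0 < x) : Vf x = 1/x^3 + Vf (x+1) := by
  rw [Vf, Summable.tsum_eq_zero_add (summableV hx)]
  congr 1
  · norm_num
  · rw [Vf]
    apply tsum_congr
    intro k
    congr 2
    push_cast
    ring

lemma Tf_nonneg (x : ℝ) : 0 ≤ Tf x := tsum_nonneg fun k => by positivity

lemma Vf_pos {x : ℝ} (hx : 0 < x) : 0 < Vf x := by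
  refine Summable.tsum_pos (summableV hx) (fun k => by positivity) 0 ?_
  exact one_div_pos.mpr (pow_pos (xk_pos hx 0) 3)

lemma Af1_nonneg {x : ℝ} (hx : 0 ≤ x) : 0 ≤ Af (x+1) := by
  refine tsum_nonneg fun k => ?_
  have h1 : (0:ℝ) < (k:ℝ)+1 := by positivity
  have h2 : ((k:ℝ)+1) ≤ x+1+(k:ℝ) := by linarith
  have := one_div_le_one_div_of_le h1 h2
  linarith

lemma h_pos {x : ℝ} (hx : 0 < x) : 0 < Af (x+1) - x * Tf (x+1) := by
  have hx1 : (0:ℝ) < x + 1 := by linarith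
  have hs1 : Summable (fun k : ℕ => 1/((k:ℝ)+1) - 1/(x+1+k)) := summableA hx1
  have hs2 : Summable (fun k : ℕ => x * (1/(x+1+(k:ℝ))^2)) := (summableT hx1).mul_left x
  have e1 : x * Tf (x+1) = ∑' k : ℕ, x * (1/(x+1+(k:ℝ))^2) := by
    rw [Tf, tsum_mul_left]
  rw [Af, e1, ← Summable.tsum_sub hs1 hs2]
  have idk : ∀ k : ℕ, 1/((k:ℝ)+1) - 1/(x+1+k) - x * (1/(x+1+(k:ℝ))^2)
      = x^2/(((k:ℝ)+1)*(x+1+(k:ℝ))^2) := by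
    intro k
    have h1 : ((k:ℝ)+1) ≠ 0 := by positivity
    have h2 : (x+1+(k:ℝ)) ≠ 0 := (xk_pos hx1 k).ne'
    field_simp
    ring
  refine Summable.tsum_pos (hs1.sub hs2) (fun k => ?_) 0 ?_
  · rw [idk k]
    have := xk_pos hx1 k
    positivity
  · rw [idk 0]
    have := xk_pos hx1 0
    positivity

lemma keypos {x : ℝ} (hx : 0 < x) : 0 < Vf x + Af x * Tf x := by
  have hx1 : (0:ℝ) < x + 1 := by linarith
  have hA : Af x = Af (x+1) - 1/x := by
    have := Af_rec hx; linarith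
  rw [hA, Tf_rec hx, Vf_rec hx]
  have h1 := h_pos hx
  have h2 := Vf_pos hx1
  have h3 := Af1_nonneg hx.le
  have h4 := Tf_nonneg (x+1)
  have e : 1/x^3 + Vf (x+1) + (Af (x+1) - 1/x) * (1/x^2 + Tf (x+1))
      = Vf (x+1) + Af (x+1) * Tf (x+1) + (Af (x+1) - x * Tf (x+1)) * (1/x^2) := by
    field_simp
    ring
  rw [e]
  have h5 : 0 < (Af (x+1) - x * Tf (x+1)) * (1/x^2) :=
    mul_pos h1 (by positivity)
  nlinarith [mul_nonneg h3 h4]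

noncomputable def phi (y : ℝ) : ℝ := Tf y - (Af y)^2

lemma hasDerivAt_phi {x : ℝ} (hx : 0 < x) :
    HasDerivAt phi (-2 * Vf x - 2 * Af x * Tf x) x := by
  have h1 := hasDerivAt_Tf hx
  have h2 := (hasDerivAt_Af hx).fun_pow 2
  have h := h1.fun_sub h2
  exact h.congr_deriv (by ring)

lemma phi_anti : StrictAntiOn phi (Ioi (0:ℝ)) := by
  apply strictAntiOn_of_deriv_neg (convex_Ioi 0)
  · intro y hy
    exact (hasDerivAt_phi hy).continuousAt.continuousWithinAt
  · rw [interior_Ioi]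
    intro y hy
    rw [(hasDerivAt_phi hy).deriv]
    nlinarith [keypos hy]

end StmtAux

noncomputable def digamma (x : ℝ) : ℝ := deriv (fun y : ℝ => Real.log (Real.Gamma y)) x

noncomputable def Bc (c x : ℝ) : ℝ := Real.Gamma x * Real.Gamma (c - x) / Real.Gamma c

noncomputable def Rc (c x : ℝ) : ℝ :=
  -digamma x - digamma (c - x) - 2 * Real.eulerMascheroniConstant

namespace StmtAux

lemma digamma_eq {x : ℝ} (hx : 0 < x) : digamma x = psi x :=
  (hasDerivAt_log_Gamma hx).deriv

lemma hasDerivAt_digamma {x : ℝ} (hx : 0 < x) : HasDerivAt digamma (Tf x) x := by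
  apply (hasDerivAt_psi hx).congr_of_eventuallyEq
  filter_upwards [Ioi_mem_nhds hx] with y hy
  exact digamma_eq hy

lemma hasDerivAt_Gamma' {x : ℝ} (hx : 0 < x) :
    HasDerivAt Real.Gamma (psi x * Real.Gamma x) x := by
  have hd : DifferentiableAt ℝ Real.Gamma x := Gamma_diff hx
  have hne : Real.Gamma x ≠ 0 := (Real.Gamma_pos_of_pos hx).ne'
  have hlog : deriv (fun y : ℝ => Real.log (Real.Gamma y)) x
      = deriv Real.Gamma x / Real.Gamma x := deriv.log hd hne
  have h2 : psi x = deriv Real.Gamma x / Real.Gamma x := by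
    rw [← digamma_eq hx, digamma, hlog]
  have h3 : deriv Real.Gamma x = psi x * Real.Gamma x := by
    rw [h2]
    field_simp
  exact h3 ▸ hd.hasDerivAt

lemma Bc_pos {c x : ℝ} (hc : 0 < c) (hx : 0 < x) (hcx : 0 < c - x) : 0 < Bc c x := by
  have h1 := Real.Gamma_pos_of_pos hx
  have h2 := Real.Gamma_pos_of_pos hcx
  have h3 := Real.Gamma_pos_of_pos hc
  exact div_pos (mul_pos h1 h2) h3

lemma hasDerivAt_Rc {c x : ℝ} (hx : 0 < x) (hcx : 0 < c - x) :
    HasDerivAt (fun y => Rc c y) (-Tf x + Tf (c-x)) x := by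
  have hd1 := hasDerivAt_digamma hx
  have hi : HasDerivAt (fun y : ℝ => c - y) (-1) x := by
    simpa using (hasDerivAt_id x).const_sub c
  have hd2 : HasDerivAt (fun y : ℝ => digamma (c - y)) (-Tf (c-x)) x := by
    have := (hasDerivAt_digamma hcx).comp x hi
    simpa [Function.comp_def] using this
  have h := (hd1.neg.sub hd2).sub_const (2 * Real.eulerMascheroniConstant)
  have : HasDerivAt (fun y => -digamma y - digamma (c - y) - 2 * Real.eulerMascheroniConstant)
      (-Tf x - -Tf (c-x)) x := h
  exact this.congr_deriv (by ring)

lemma hasDerivAt_Bc {c x : ℝ} (hc : 0 < c) (hx : 0 < x) (hcx : 0 < c - x) :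
    HasDerivAt (fun y => Bc c y) ((psi x - psi (c-x)) * Bc c x) x := by
  have h1 := hasDerivAt_Gamma' hx
  have hi : HasDerivAt (fun y : ℝ => c - y) (-1) x := by
    simpa using (hasDerivAt_id x).const_sub c
  have h2 : HasDerivAt (fun y : ℝ => Real.Gamma (c - y))
      (-(psi (c-x) * Real.Gamma (c-x))) x := by
    have := (hasDerivAt_Gamma' hcx).comp x hi
    simpa [Function.comp_def] using this
  have h3 := (h1.fun_mul h2).div_const (Real.Gamma c)
  have hne : Real.Gamma c ≠ 0 := (Real.Gamma_pos_of_pos hc).ne'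
  refine h3.congr_deriv ?_
  rw [Bc]
  field_simp
  ring

end StmtAux

namespace StmtAux

lemma Rc_eq {c x : ℝ} (hx : 0 < x) (hcx : 0 < c - x) :
    Rc c x = -Af x - Af (c-x) := by
  rw [Rc, digamma_eq hx, digamma_eq hcx]
  simp only [psi]
  ring

end StmtAux

theorem stmt_8 (c : ℝ) (hc : 0 < c) :
    StrictAntiOn (fun x => Rc c x / Bc c x) (Set.Ioc 0 (c / 2)) ∧
      Filter.Tendsto (fun x => Rc c x / Bc c x) (nhdsWithin 0 (Set.Ioi 0)) (nhds 1) := by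
  constructor
  · apply strictAntiOn_of_deriv_neg (convex_Ioc 0 (c/2))
    · intro x hx
      have hx0 : 0 < x := hx.1
      have hcx : 0 < c - x := by have := hx.2; linarith
      have hB := StmtAux.hasDerivAt_Bc hc hx0 hcx
      have hR := StmtAux.hasDerivAt_Rc hx0 hcx
      have hBne : Bc c x ≠ 0 := (StmtAux.Bc_pos hc hx0 hcx).ne'
      exact ((hR.continuousAt.div hB.continuousAt hBne)).continuousWithinAt
    · rw [interior_Ioc]
      intro x hx
      have hx0 : 0 < x := hx.1
      have hxlt : x < c/2 := hx.2
      have hcx : 0 < c - x := by linarith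
      have hBpos := StmtAux.Bc_pos hc hx0 hcx
      have hBne : Bc c x ≠ 0 := hBpos.ne'
      have hq := (StmtAux.hasDerivAt_Rc hx0 hcx).fun_div (StmtAux.hasDerivAt_Bc hc hx0 hcx) hBne
      rw [hq.deriv]
      apply div_neg_of_neg_of_pos
      · have hE : (-StmtAux.Tf x + StmtAux.Tf (c-x)) * Bc c x
            - Rc c x * ((StmtAux.psi x - StmtAux.psi (c-x)) * Bc c x)
            = (StmtAux.phi (c-x) - StmtAux.phi x) * Bc c x := by
          rw [StmtAux.Rc_eq hx0 hcx]
          simp only [StmtAux.phi, StmtAux.psi]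
          ring
        rw [hE]
        have hlt : StmtAux.phi (c-x) < StmtAux.phi x :=
          StmtAux.phi_anti (Set.mem_Ioi.mpr hx0) (Set.mem_Ioi.mpr hcx) (by linarith)
        exact mul_neg_of_neg_of_pos (by linarith) hBpos
      · positivity
  · have hIoo : Set.Ioo (0:ℝ) c ∈ nhdsWithin 0 (Set.Ioi 0) :=
      Ioo_mem_nhdsGT_of_mem ⟨le_refl 0, hc⟩
    have hγc : Real.Gamma c ≠ 0 := (Real.Gamma_pos_of_pos hc).ne'
    have tadd : Filter.Tendsto (fun x : ℝ => x + 1) (nhds 0) (nhds 1) := by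
      simpa using (continuous_id.fun_add continuous_const).tendsto (0:ℝ)
    have tsub : Filter.Tendsto (fun x : ℝ => c - x) (nhds 0) (nhds c) := by
      simpa using (continuous_const.fun_sub continuous_id).tendsto (0:ℝ)
    have t1 : Filter.Tendsto (fun x : ℝ => Real.Gamma (x+1)) (nhds 0) (nhds 1) := by
      have h := ((StmtAux.Gamma_diff one_pos).continuousAt.tendsto).comp tadd
      simpa [Real.Gamma_one, Function.comp_def] using h
    have t2 : Filter.Tendsto (fun x : ℝ => Real.Gamma (c - x)) (nhds 0) (nhds (Real.Gamma c)) :=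
      ((StmtAux.Gamma_diff hc).continuousAt.tendsto).comp tsub
    have t3 : Filter.Tendsto (fun x : ℝ => StmtAux.psi (x+1)) (nhds 0) (nhds (StmtAux.psi 1)) :=
      ((StmtAux.hasDerivAt_psi one_pos).continuousAt.tendsto).comp tadd
    have t4 : Filter.Tendsto (fun x : ℝ => StmtAux.psi (c - x)) (nhds 0)
        (nhds (StmtAux.psi c)) :=
      ((StmtAux.hasDerivAt_psi hc).continuousAt.tendsto).comp tsub
    have hD : Filter.Tendsto (fun x => x * Bc c x) (nhdsWithin 0 (Set.Ioi 0)) (nhds 1) := by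
      have hD' : Filter.Tendsto (fun x : ℝ => Real.Gamma (x+1) * Real.Gamma (c-x) / Real.Gamma c)
          (nhds 0) (nhds (1 * Real.Gamma c / Real.Gamma c)) := (t1.mul t2).div_const _
      have hval : (1:ℝ) * Real.Gamma c / Real.Gamma c = 1 := by field_simp
      rw [hval] at hD'
      refine (hD'.mono_left nhdsWithin_le_nhds).congr' ?_
      filter_upwards [hIoo] with x hx
      have hx0 : (0:ℝ) < x := hx.1
      rw [Bc, Real.Gamma_add_one hx0.ne']
      ring
    have hN : Filter.Tendsto (fun x => x * Rc c x) (nhdsWithin 0 (Set.Ioi 0)) (nhds 1) := by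
      have hN' : Filter.Tendsto (fun x : ℝ => 1 - x * StmtAux.psi (x+1) - x * StmtAux.psi (c-x)
          - 2 * Real.eulerMascheroniConstant * x) (nhds 0)
          (nhds (1 - 0 * StmtAux.psi 1 - 0 * StmtAux.psi c
            - 2 * Real.eulerMascheroniConstant * 0)) := by
        exact ((((tendsto_const_nhds).sub ((continuous_id.tendsto 0).mul t3)).sub
          ((continuous_id.tendsto 0).mul t4)).sub (tendsto_const_nhds.mul (continuous_id.tendsto 0)))
      have hval : (1:ℝ) - 0 * StmtAux.psi 1 - 0 * StmtAux.psi c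
          - 2 * Real.eulerMascheroniConstant * 0 = 1 := by ring
      rw [hval] at hN'
      refine (hN'.mono_left nhdsWithin_le_nhds).congr' ?_
      filter_upwards [hIoo] with x hx
      have hx0 : (0:ℝ) < x := hx.1
      have hcx : 0 < c - x := by linarith [hx.2]
      rw [Rc, StmtAux.digamma_eq hx0, StmtAux.digamma_eq hcx,
        show StmtAux.psi x = StmtAux.psi (x+1) - 1/x from by linarith [StmtAux.psi_rec hx0]]
      field_simp
      ring
    have hfinal := hN.div hD one_ne_zero
    rw [div_one] at hfinal
    refine hfinal.congr' ?_
    filter_upwards [self_mem_nhdsWithin] with x hx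
    exact mul_div_mul_left (Rc c x) (Bc c x) (ne_of_gt hx)
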